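/- Let m₁ be a positive integer, λ > 0, C > 0, α₂ > 0, μ₂ > 0 and Ῡ > 0. Let γ₁ and γ₂ be independent random variables, where γ₁ has the Gamma(m₁, λ) density and γ₂ has the α-μ density with parameters (α₂, μ₂, Ῡ), with density f₂. Then E[ ln( 1 + γ₁γ₂/(γ₂ + C) ) ] = Σ_{n=0}^{m₁−1} (1/n!) Σ_{p=0}^{n} C(n,p) λ^{n} C^{p} ∫_0^∞ ( z^{n}/(1 + z) ) e^{−λz} ( ∫_0^∞ x^{−p} e^{−λCz/x} f₂(x) dx ) dz, where C(n,p) denotes the binomial coefficient. -/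

import Mathlib

open MeasureTheory ProbabilityTheory Set Filter Topology

section AuxLemmas

lemma aux_tendsto_pow_mul_exp (k : ℕ) {b : ℝ} (hb : 0 < b) :
    Tendsto (fun x : ℝ => x ^ k * Real.exp (-b * x)) atTop (nhds 0) := by
  refine (tendsto_rpow_mul_exp_neg_mul_atTop_nhds_zero k b hb).congr' ?_
  filter_upwards [eventually_gt_atTop (0:ℝ)] with x hx
  rw [Real.rpow_natCast]

lemma aux_integrableOn_pow_mul_exp (k : ℕ) {b : ℝ} (hb : 0 < b) :
    IntegrableOn (fun t : ℝ => t ^ k * Real.exp (-b * t)) (Set.Ioi 0) := by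
  apply integrable_of_isBigO_exp_neg (half_pos hb)
  · exact ((continuous_pow k).mul
      (Real.continuous_exp.comp (continuous_const.mul continuous_id))).continuousOn
  · have h0 : Tendsto (fun x : ℝ => x ^ k * Real.exp (-(b/2) * x)) atTop (nhds 0) :=
      aux_tendsto_pow_mul_exp k (half_pos hb)
    have h1 : (fun x : ℝ => x ^ k * Real.exp (-(b/2) * x)) =O[atTop] (fun _ => (1:ℝ)) :=
      h0.isBigO_one ℝ
    have h2 := h1.mul (Asymptotics.isBigO_refl (fun x : ℝ => Real.exp (-(b/2) * x)) atTop)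
    refine (h2.congr (fun x => ?_) (fun x => one_mul _))
    rw [mul_assoc, ← Real.exp_add]
    ring_nf

lemma aux_hasDerivAt_S {m : ℕ} (hm : 0 < m) {lam : ℝ} (y : ℝ) :
    HasDerivAt (fun y : ℝ => -(Real.exp (-lam * y) *
        ∑ n ∈ Finset.range m, lam ^ n * y ^ n / n.factorial))
      (lam ^ m * y ^ (m - 1) * Real.exp (-lam * y) / (m - 1).factorial) y := by
  have hexp : HasDerivAt (fun y : ℝ => Real.exp (-lam * y)) (-lam * Real.exp (-lam * y)) y := by
    simpa [mul_comm] using (((hasDerivAt_id y).const_mul (-lam)).exp)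
  have hP : HasDerivAt (fun y : ℝ => ∑ n ∈ Finset.range m, lam ^ n * y ^ n / n.factorial)
      (∑ n ∈ Finset.range m, lam ^ n * (n * y ^ (n - 1)) / n.factorial) y := by
    refine HasDerivAt.fun_sum (fun n _ => ?_)
    exact ((hasDerivAt_pow n y).const_mul (lam ^ n)).div_const _
  have hsum : (∑ n ∈ Finset.range m, lam ^ n * (n * y ^ (n - 1)) / n.factorial)
      = lam * ∑ n ∈ Finset.range (m - 1), lam ^ n * y ^ n / n.factorial := by
    obtain ⟨m', rfl⟩ : ∃ m', m = m' + 1 := ⟨m - 1, (Nat.succ_pred_eq_of_pos hm).symm⟩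
    rw [Finset.sum_range_succ']
    simp only [Nat.add_sub_cancel]
    rw [Finset.mul_sum]
    simp only [CharP.cast_eq_zero, zero_mul, mul_zero, pow_zero, Nat.factorial_zero,
      Nat.cast_one, zero_div, add_zero, one_mul, zero_add]
    refine Finset.sum_congr rfl (fun i _ => ?_)
    have : ((i+1).factorial : ℝ) = (i+1) * i.factorial := by
      rw [Nat.factorial_succ]; push_cast; ring
    rw [this]
    have hfac : (i.factorial : ℝ) ≠ 0 := Nat.cast_ne_zero.mpr (Nat.factorial_ne_zero i)
    have hi1 : ((i:ℝ)+1) ≠ 0 := by positivity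
    field_simp
    push_cast
    ring
  have := (hexp.mul hP).neg
  refine this.congr_deriv ?_
  rw [hsum]
  have hPsplit : (∑ n ∈ Finset.range m, lam ^ n * y ^ n / n.factorial)
      = (∑ n ∈ Finset.range (m - 1), lam ^ n * y ^ n / n.factorial)
        + lam ^ (m-1) * y ^ (m-1) / (m-1).factorial := by
    obtain ⟨m', rfl⟩ : ∃ m', m = m' + 1 := ⟨m - 1, (Nat.succ_pred_eq_of_pos hm).symm⟩
    simp [Finset.sum_range_succ]
  rw [hPsplit]
  have hpow : lam ^ m = lam * lam ^ (m - 1) := by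
    obtain ⟨m', rfl⟩ : ∃ m', m = m' + 1 := ⟨m - 1, (Nat.succ_pred_eq_of_pos hm).symm⟩
    simp [pow_succ]; ring
  rw [hpow]; ring

lemma aux_gamma_integrable {m : ℕ} {lam : ℝ} (hlam : 0 < lam) {t : ℝ} (ht : 0 ≤ t) :
    IntegrableOn
      (fun y : ℝ => lam ^ m * y ^ (m - 1) * Real.exp (-lam * y) / (m - 1).factorial)
      (Set.Ioi t) := by
  have h0 : IntegrableOn
      (fun y : ℝ => lam ^ m * (y ^ (m - 1) * Real.exp (-lam * y)) / ((m - 1).factorial : ℝ))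
      (Set.Ioi 0) :=
    ((aux_integrableOn_pow_mul_exp (m-1) hlam).const_mul (lam ^ m)).div_const
      ((m-1).factorial : ℝ)
  exact ((h0.mono_set (Set.Ioi_subset_Ioi ht)).congr_fun (fun y _ => by ring)
    measurableSet_Ioi)

lemma aux_gamma_survival {m : ℕ} (hm : 0 < m) {lam : ℝ} (hlam : 0 < lam) {t : ℝ} (ht : 0 ≤ t) :
    ∫ y in Set.Ioi t, lam ^ m * y ^ (m - 1) * Real.exp (-lam * y) / (m - 1).factorial
      = Real.exp (-lam * t) * ∑ n ∈ Finset.range m, lam ^ n * t ^ n / n.factorial := by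
  have hint := aux_gamma_integrable (m := m) hlam ht
  have htend : Tendsto (fun y : ℝ => -(Real.exp (-lam * y) *
      ∑ n ∈ Finset.range m, lam ^ n * y ^ n / n.factorial)) atTop (nhds 0) := by
    have : Tendsto (fun y : ℝ => Real.exp (-lam * y) *
        ∑ n ∈ Finset.range m, lam ^ n * y ^ n / n.factorial) atTop (nhds 0) := by
      have h : Tendsto (fun y : ℝ => ∑ n ∈ Finset.range m,
          lam ^ n / n.factorial * (y ^ n * Real.exp (-lam * y))) atTop (nhds 0) := by
        have := tendsto_finset_sum (Finset.range m)
          (fun n _ => ((aux_tendsto_pow_mul_exp n hlam).const_mul (lam ^ n / n.factorial)))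
        simpa using this
      refine h.congr (fun y => ?_)
      rw [Finset.mul_sum]
      exact Finset.sum_congr rfl fun n _ => by ring
    simpa using this.neg
  have := integral_Ioi_of_hasDerivAt_of_tendsto'
    (f := fun y : ℝ => -(Real.exp (-lam * y) * ∑ n ∈ Finset.range m, lam ^ n * y ^ n / n.factorial))
    (fun y _ => aux_hasDerivAt_S hm y) hint htend
  rw [this]; ring

lemma aux_integral_inv_one_add {c : ℝ} (hc : 0 ≤ c) :
    ∫ z in Set.Ioc (0:ℝ) c, (1 + z)⁻¹ = Real.log (1 + c) := by
  have h1 : ∫ z in (0:ℝ)..c, (1 + z)⁻¹ = Real.log (1 + c) := by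
    have := intervalIntegral.integral_comp_add_left (a := (0:ℝ)) (b := c)
      (fun u : ℝ => u⁻¹) 1
    rw [this, add_zero]
    rw [integral_inv (by
      intro h
      rcases Set.mem_uIcc.mp h with ⟨h1', h2'⟩ | ⟨h1', h2'⟩ <;> linarith)]
    rw [div_one]
  rw [← h1, intervalIntegral.integral_of_le hc]

lemma aux_ofReal_log_eq {c : ℝ} (hc : 0 ≤ c) :
    ENNReal.ofReal (Real.log (1 + c))
      = ∫⁻ z in Set.Ioc (0:ℝ) c, ENNReal.ofReal ((1 + z)⁻¹) := by
  rw [← aux_integral_inv_one_add hc]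
  refine ofReal_integral_eq_lintegral_ofReal ?_ ?_
  · have h0 : IntegrableOn (fun z : ℝ => (1 + z)⁻¹) (Set.Icc 0 c) := by
      apply ContinuousOn.integrableOn_Icc
      apply ContinuousOn.inv₀ (by fun_prop)
      intro x hx; have := hx.1; positivity
    exact h0.mono_set Set.Ioc_subset_Icc_self
  · refine (ae_restrict_iff' measurableSet_Ioc).mpr (ae_of_all _ (fun z hz => ?_))
    have := hz.1; positivity

lemma aux_logint {μ : Measure ℝ} [IsFiniteMeasure μ] (hμ0 : μ (Set.Iic 0) = 0)
    {a : ℝ} (ha : 0 < a) (S : ℝ → ℝ)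
    (hS : ∀ t, 0 < t → μ (Set.Ici t) = ENNReal.ofReal (S t)) :
    ∫⁻ y, ENNReal.ofReal (Real.log (1 + a * y)) ∂μ
      = ∫⁻ z in Set.Ioi (0:ℝ),
          ENNReal.ofReal ((1 + z)⁻¹) * ENNReal.ofReal (S (z / a)) := by
  set D : ℝ × ℝ → ENNReal := fun p =>
    ENNReal.ofReal ((1 + p.2)⁻¹) * Set.indicator {q : ℝ × ℝ | q.2 ≤ a * q.1} 1 p with hD
  have hmeasD : Measurable D := by
    apply Measurable.mul
    · exact ENNReal.measurable_ofReal.comp ((measurable_const.add measurable_snd).inv)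
    · exact measurable_const.indicator
        (isClosed_le continuous_snd (continuous_const.mul continuous_fst)).measurableSet
  have hae : ∀ᵐ y ∂μ, 0 < y := by
    rw [ae_iff]
    have : {y : ℝ | ¬ 0 < y} = Set.Iic 0 := by ext y; simp
    rw [this]; exact hμ0
  have step1 : ∀ y : ℝ, 0 < y →
      ENNReal.ofReal (Real.log (1 + a * y)) = ∫⁻ z in Set.Ioi (0:ℝ), D (y, z) := by
    intro y hy
    have hc : 0 ≤ a * y := by positivity
    have hptw : ∀ z : ℝ, D (y, z)
        = (Set.Iic (a * y)).indicator (fun z => ENNReal.ofReal ((1 + z)⁻¹)) z := by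
      intro z
      simp only [hD, Set.indicator_apply, Set.mem_setOf_eq, Set.mem_Iic]
      by_cases h : z ≤ a * y <;> simp [h]
    calc ENNReal.ofReal (Real.log (1 + a * y))
        = ∫⁻ z in Set.Ioc (0:ℝ) (a*y), ENNReal.ofReal ((1 + z)⁻¹) := aux_ofReal_log_eq hc
      _ = ∫⁻ z in Set.Ioi (0:ℝ), D (y, z) := by
          rw [show ∀ f : ℝ → ENNReal, ∫⁻ z in Set.Ioi (0:ℝ), D (y, z)
              = ∫⁻ z in Set.Ioi (0:ℝ),
                  (Set.Iic (a*y)).indicator (fun z => ENNReal.ofReal ((1 + z)⁻¹)) z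
            from fun _ => lintegral_congr (fun z => by rw [hptw])]
          rw [lintegral_indicator measurableSet_Iic,
            Measure.restrict_restrict measurableSet_Iic, Set.inter_comm,
            Set.Ioi_inter_Iic]
          exact fun _ => 0
  have swap : ∫⁻ y, ENNReal.ofReal (Real.log (1 + a * y)) ∂μ
      = ∫⁻ z in Set.Ioi (0:ℝ), ∫⁻ y, D (y, z) ∂μ := by
    rw [lintegral_congr_ae (hae.mono (fun y hy => step1 y hy))]
    exact lintegral_lintegral_swap (hmeasD.aemeasurable)
  rw [swap]
  refine setLIntegral_congr_fun measurableSet_Ioi (fun z hz => ?_)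
  have hz : (0:ℝ) < z := hz
  have hind : ∀ y : ℝ, D (y, z)
      = (Set.Ici (z / a)).indicator (fun _ => ENNReal.ofReal ((1 + z)⁻¹)) y := by
    intro y
    simp only [hD, Set.indicator_apply, Set.mem_setOf_eq, Set.mem_Ici, div_le_iff₀ ha]
    by_cases h : z ≤ a * y
    · rw [if_pos h, if_pos (by linarith [mul_comm a y] : z ≤ y * a)]; simp [h]
    · rw [if_neg h, if_neg (by rw [mul_comm]; exact h)]; simp [h]
  calc ∫⁻ y, D (y, z) ∂μ
      = ∫⁻ y, (Set.Ici (z / a)).indicator (fun _ => ENNReal.ofReal ((1 + z)⁻¹)) y ∂μ :=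
        lintegral_congr (fun y => by rw [hind])
    _ = ENNReal.ofReal ((1 + z)⁻¹) * μ (Set.Ici (z / a)) :=
        lintegral_indicator_const measurableSet_Ici _
    _ = ENNReal.ofReal ((1 + z)⁻¹) * ENNReal.ofReal (S (z / a)) := by
        rw [hS _ (by positivity)]

lemma aux_S_expand {m : ℕ} {lam C : ℝ} {x z : ℝ} (hx : 0 < x) :
    Real.exp (-lam * (z * (x + C) / x))
        * ∑ n ∈ Finset.range m, lam ^ n * (z * (x + C) / x) ^ n / n.factorial
      = ∑ n ∈ Finset.range m, (1 / (n.factorial : ℝ)) *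
          ∑ p ∈ Finset.range (n + 1),
            (n.choose p : ℝ) * lam ^ n * C ^ p * (z ^ n * Real.exp (-lam * z))
              * (x ^ (-(p : ℝ)) * Real.exp (-(lam * C * z) / x)) := by
  have hxne : x ≠ 0 := ne_of_gt hx
  have hexp : Real.exp (-lam * (z * (x + C) / x))
      = Real.exp (-lam * z) * Real.exp (-(lam * C * z) / x) := by
    rw [← Real.exp_add]; congr 1; field_simp; ring
  have ht : ∀ n : ℕ, (z * (x + C) / x) ^ n = z ^ n * ((x + C) ^ n / x ^ n) := by
    intro n; rw [div_pow, mul_pow]; ring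
  have hbin : ∀ n : ℕ, (x + C) ^ n
      = ∑ p ∈ Finset.range (n + 1), C ^ p * x ^ (n - p) * (n.choose p : ℝ) := by
    intro n; rw [add_comm]; exact add_pow C x n
  rw [Finset.mul_sum]
  refine Finset.sum_congr rfl (fun n _ => ?_)
  rw [hexp, ht, hbin, Finset.mul_sum]
  simp only [Finset.sum_div, Finset.mul_sum]
  refine Finset.sum_congr rfl (fun p hp => ?_)
  have hp' : p ≤ n := Finset.mem_range_succ_iff.mp hp
  have hxp : x ^ (-(p : ℝ)) = x ^ (n - p) / x ^ n := by
    rw [pow_sub₀ x hxne hp', ← Real.rpow_natCast x p, ← Real.rpow_neg hx.le]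
    field_simp
  rw [hxp]
  ring

lemma aux_pointwise {m : ℕ} {lam C z : ℝ} (hlam : 0 < lam) (hC : 0 < C) (hz : 0 < z)
    (f₂ : ℝ → ℝ) (hf₂nn : ∀ x, 0 ≤ f₂ x) (hf₂0 : ∀ x, x ≤ 0 → f₂ x = 0) (x : ℝ) :
    ENNReal.ofReal (f₂ x) * (ENNReal.ofReal ((1 + z)⁻¹) *
        ENNReal.ofReal (Real.exp (-lam * (z * (x + C) / x))
          * ∑ n ∈ Finset.range m, lam ^ n * (z * (x + C) / x) ^ n / n.factorial))
      = ∑ n ∈ Finset.range m, ∑ p ∈ Finset.range (n + 1),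
          ENNReal.ofReal ((1 / (n.factorial : ℝ)) * (n.choose p : ℝ) * lam ^ n * C ^ p)
            * ENNReal.ofReal (z ^ n / (1 + z) * Real.exp (-lam * z))
            * ENNReal.ofReal (x ^ (-(p : ℝ)) * Real.exp (-(lam * C * z) / x) * f₂ x) := by
  have h1z : (0:ℝ) < 1 + z := by linarith
  rcases le_or_gt x 0 with hx | hx
  · simp [hf₂0 x hx]
  · have h1 : (0:ℝ) ≤ (1 + z)⁻¹ := by positivity
    rw [← ENNReal.ofReal_mul h1, ← ENNReal.ofReal_mul (hf₂nn x), aux_S_expand hx]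
    have hreal : f₂ x * ((1 + z)⁻¹ *
          ∑ n ∈ Finset.range m, (1 / (n.factorial : ℝ)) *
            ∑ p ∈ Finset.range (n + 1),
              (n.choose p : ℝ) * lam ^ n * C ^ p * (z ^ n * Real.exp (-lam * z))
                * (x ^ (-(p : ℝ)) * Real.exp (-(lam * C * z) / x)))
        = ∑ n ∈ Finset.range m, ∑ p ∈ Finset.range (n + 1),
            ((1 / (n.factorial : ℝ)) * (n.choose p : ℝ) * lam ^ n * C ^ p)
              * (z ^ n / (1 + z) * Real.exp (-lam * z))
              * (x ^ (-(p : ℝ)) * Real.exp (-(lam * C * z) / x) * f₂ x) := by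
      simp only [Finset.mul_sum]
      refine Finset.sum_congr rfl fun n _ => Finset.sum_congr rfl fun p _ => ?_
      field_simp
    rw [hreal]
    have hterm : ∀ n p : ℕ, 0 ≤ ((1 / (n.factorial : ℝ)) * (n.choose p : ℝ) * lam ^ n * C ^ p)
        * (z ^ n / (1 + z) * Real.exp (-lam * z))
        * (x ^ (-(p : ℝ)) * Real.exp (-(lam * C * z) / x) * f₂ x) := by
      intro n p
      have h2 : (0:ℝ) ≤ x ^ (-(p : ℝ)) * Real.exp (-(lam * C * z) / x) * f₂ x :=
        mul_nonneg (mul_nonneg (Real.rpow_nonneg hx.le _) (Real.exp_pos _).le) (hf₂nn x)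
      have h3 : (0:ℝ) ≤ z ^ n / (1 + z) * Real.exp (-lam * z) := by positivity
      have h4 : (0:ℝ) ≤ (1 / (n.factorial : ℝ)) * (n.choose p : ℝ) * lam ^ n * C ^ p := by
        positivity
      exact mul_nonneg (mul_nonneg h4 h3) h2
    rw [ENNReal.ofReal_sum_of_nonneg (fun n _ =>
      Finset.sum_nonneg (fun p _ => hterm n p))]
    refine Finset.sum_congr rfl fun n _ => ?_
    rw [ENNReal.ofReal_sum_of_nonneg (fun p _ => hterm n p)]
    refine Finset.sum_congr rfl fun p _ => ?_
    have h3 : (0:ℝ) ≤ z ^ n / (1 + z) * Real.exp (-lam * z) := by positivity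
    have h4 : (0:ℝ) ≤ (1 / (n.factorial : ℝ)) * (n.choose p : ℝ) * lam ^ n * C ^ p := by
      positivity
    rw [ENNReal.ofReal_mul (mul_nonneg h4 h3), ENNReal.ofReal_mul h4]

lemma aux_rpow_exp_bound {c x : ℝ} (hc : 0 < c) (hx : 0 < x) (p : ℕ) :
    x ^ (-(p : ℝ)) * Real.exp (-c / x) ≤ (p.factorial : ℝ) / c ^ p := by
  have hfac : (0:ℝ) < p.factorial := by exact_mod_cast p.factorial_pos
  have he : (0:ℝ) < Real.exp (c / x) := Real.exp_pos _
  have h1 : (c / x) ^ p / (p.factorial : ℝ) ≤ Real.exp (c / x) := by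
    refine le_trans ?_ (Real.sum_le_exp_of_nonneg (by positivity) (p + 1))
    refine Finset.single_le_sum (f := fun i => (c/x)^i / (i.factorial : ℝ))
      (fun i _ => by positivity) (Finset.self_mem_range_succ p)
  have h2 : c ^ p ≤ (p.factorial : ℝ) * Real.exp (c / x) * x ^ p := by
    have h3 : (c / x) ^ p ≤ (p.factorial : ℝ) * Real.exp (c / x) := by
      have := (div_le_iff₀ hfac).mp h1; linarith [this]
    rw [div_pow] at h3
    calc c ^ p = c ^ p / x ^ p * x ^ p := by field_simp
      _ ≤ (p.factorial : ℝ) * Real.exp (c / x) * x ^ p :=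
          mul_le_mul_of_nonneg_right h3 (by positivity)
  have hrw : x ^ (-(p : ℝ)) * Real.exp (-c / x) = 1 / (x ^ p * Real.exp (c / x)) := by
    rw [Real.rpow_neg hx.le, Real.rpow_natCast, neg_div, Real.exp_neg, one_div, mul_inv]
  rw [hrw, div_le_div_iff₀ (by positivity) (by positivity)]
  nlinarith [pow_pos hx p, pow_pos hc p]

end AuxLemmas

/-- Exact ORA capacity integral `E[ln (1 + γ₁ γ₂ / (γ₂ + C))]` when `γ₁` is
`Gamma (m₁, lam)` with integer shape and `γ₂` is `α`-`μ` distributed with density `f₂`. -/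
theorem ora_end_to_end_battery_case {Θ : Type*} [MeasureSpace Θ]
    [IsProbabilityMeasure (ℙ : Measure Θ)]
    (m₁ : ℕ) (hm₁ : 0 < m₁) (lam C α₂ μ₂ Υb : ℝ)
    (hlam : 0 < lam) (hC : 0 < C)
    (hα₂ : 0 < α₂) (hμ₂ : 0 < μ₂) (hΥb : 0 < Υb)
    (γ₁ γ₂ : Θ → ℝ) (hγ₁m : Measurable γ₁) (hγ₂m : Measurable γ₂)
    (hindep : IndepFun γ₁ γ₂ ℙ)
    (hγ₁ : Measure.map γ₁ ℙ = volume.withDensity fun x => ENNReal.ofReal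
      (if 0 < x then lam ^ m₁ * x ^ (m₁ - 1) * Real.exp (-lam * x) / Real.Gamma (m₁ : ℝ)
       else 0))
    (f₂ : ℝ → ℝ)
    (hf₂ : ∀ x : ℝ, f₂ x = if 0 < x then
        α₂ * μ₂ ^ μ₂ / (2 * Real.Gamma μ₂ * Υb) * (x / Υb) ^ (α₂ * μ₂ / 2 - 1)
          * Real.exp (-μ₂ * (x / Υb) ^ (α₂ / 2)) else 0)
    (hγ₂ : Measure.map γ₂ ℙ = volume.withDensity fun x => ENNReal.ofReal (f₂ x)) :
    ∫ ω, Real.log (1 + γ₁ ω * γ₂ ω / (γ₂ ω + C))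
      = ∑ n ∈ Finset.range m₁, (1 / (n.factorial : ℝ)) *
          ∑ p ∈ Finset.range (n + 1),
            (n.choose p : ℝ) * lam ^ n * C ^ p *
              ∫ z in Set.Ioi (0 : ℝ), z ^ n / (1 + z) * Real.exp (-lam * z) *
                ∫ x in Set.Ioi (0 : ℝ),
                  x ^ (-(p : ℝ)) * Real.exp (-(lam * C * z) / x) * f₂ x := by
  have hprob₁ : IsProbabilityMeasure (Measure.map γ₁ ℙ) :=
    Measure.isProbabilityMeasure_map hγ₁m.aemeasurable
  have hprob₂ : IsProbabilityMeasure (Measure.map γ₂ ℙ) :=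
    Measure.isProbabilityMeasure_map hγ₂m.aemeasurable
  have hΓ : Real.Gamma (m₁ : ℝ) = ((m₁ - 1).factorial : ℝ) := by
    obtain ⟨m', rfl⟩ : ∃ m', m₁ = m' + 1 := ⟨m₁ - 1, (Nat.succ_pred_eq_of_pos hm₁).symm⟩
    rw [Nat.add_sub_cancel, show ((m' + 1 : ℕ) : ℝ) = (m' : ℝ) + 1 by push_cast; ring]
    exact Real.Gamma_nat_eq_factorial m'
  have hΓ₂pos : 0 < Real.Gamma μ₂ := Real.Gamma_pos_of_pos hμ₂
  have hf₂nn : ∀ x, 0 ≤ f₂ x := by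
    intro x
    rw [hf₂ x]
    split_ifs with hx
    · have h1 : 0 < x / Υb := by positivity
      positivity
    · exact le_rfl
  have hf₂0 : ∀ x, x ≤ 0 → f₂ x = 0 := fun x hx => by
    rw [hf₂ x, if_neg (not_lt.mpr hx)]
  have hf₂meas : Measurable f₂ := by
    have : f₂ = fun x => if 0 < x then
        α₂ * μ₂ ^ μ₂ / (2 * Real.Gamma μ₂ * Υb) * (x / Υb) ^ (α₂ * μ₂ / 2 - 1)
          * Real.exp (-μ₂ * (x / Υb) ^ (α₂ / 2)) else 0 := funext hf₂
    rw [this]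
    refine Measurable.ite measurableSet_Ioi ?_ measurable_const
    fun_prop
  -- null sets for the pushforward laws
  have hμ₁0 : Measure.map γ₁ ℙ (Set.Iic 0) = 0 := by
    refine le_antisymm ?_ zero_le
    rw [hγ₁, withDensity_apply _ measurableSet_Iic]
    refine le_trans (setLIntegral_mono_ae' (g := fun _ => (0:ENNReal)) measurableSet_Iic
      (ae_of_all _ (fun x hx => by
        rw [if_neg (not_lt.mpr (Set.mem_Iic.mp hx))]; simp))) (by simp)
  have hμ₂0 : Measure.map γ₂ ℙ (Set.Iic 0) = 0 := by
    refine le_antisymm ?_ zero_le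
    rw [hγ₂, withDensity_apply _ measurableSet_Iic]
    refine le_trans (setLIntegral_mono_ae' (g := fun _ => (0:ENNReal)) measurableSet_Iic
      (ae_of_all _ (fun x hx => by
        rw [hf₂0 x (Set.mem_Iic.mp hx)]; simp))) (by simp)
  -- survival function of the Gamma law
  have hSurv : ∀ t : ℝ, 0 < t → Measure.map γ₁ ℙ (Set.Ici t)
      = ENNReal.ofReal (Real.exp (-lam * t)
          * ∑ n ∈ Finset.range m₁, lam ^ n * t ^ n / n.factorial) := by
    intro t ht
    have hsingle : Measure.map γ₁ ℙ {t} = 0 := by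
      rw [hγ₁]
      exact (withDensity_absolutelyContinuous volume _) (measure_singleton t)
    have hIci : Measure.map γ₁ ℙ (Set.Ici t) = Measure.map γ₁ ℙ (Set.Ioi t) := by
      refine le_antisymm ?_ (measure_mono Set.Ioi_subset_Ici_self)
      calc Measure.map γ₁ ℙ (Set.Ici t) ≤ Measure.map γ₁ ℙ ({t} ∪ Set.Ioi t) := by
            refine measure_mono (fun y hy => ?_)
            rcases eq_or_lt_of_le (Set.mem_Ici.mp hy) with h | h
            · exact Or.inl (by simp [h.symm])
            · exact Or.inr h
        _ ≤ Measure.map γ₁ ℙ {t} + Measure.map γ₁ ℙ (Set.Ioi t) := measure_union_le _ _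
        _ = Measure.map γ₁ ℙ (Set.Ioi t) := by rw [hsingle, zero_add]
    rw [hIci, hγ₁, withDensity_apply _ measurableSet_Ioi]
    rw [setLIntegral_congr_fun measurableSet_Ioi (fun y hy => by
      rw [if_pos (ht.trans hy), hΓ])]
    rw [← ofReal_integral_eq_lintegral_ofReal (aux_gamma_integrable hlam ht.le)
      ((ae_restrict_iff' measurableSet_Ioi).mpr (ae_of_all _ (fun y hy => by
        have hy0 : (0:ℝ) < y := ht.trans hy
        have h1 : (0:ℝ) ≤ y ^ (m₁ - 1) := le_of_lt (pow_pos hy0 _)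
        have h2 : (0:ℝ) < lam ^ m₁ := pow_pos hlam _
        positivity)))]
    rw [aux_gamma_survival hm₁ hlam ht.le]
  -- a.e. positivity on Θ
  have haeΘ₁ : ∀ᵐ ω ∂(ℙ : Measure Θ), 0 < γ₁ ω := by
    rw [ae_iff]
    have h : {ω | ¬ 0 < γ₁ ω} = γ₁ ⁻¹' (Set.Iic 0) := by ext ω; simp
    rw [h, ← Measure.map_apply hγ₁m measurableSet_Iic]
    exact hμ₁0
  have haeΘ₂ : ∀ᵐ ω ∂(ℙ : Measure Θ), 0 < γ₂ ω := by
    rw [ae_iff]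
    have h : {ω | ¬ 0 < γ₂ ω} = γ₂ ⁻¹' (Set.Iic 0) := by ext ω; simp
    rw [h, ← Measure.map_apply hγ₂m measurableSet_Iic]
    exact hμ₂0
  have hnnΘ : 0 ≤ᵐ[(ℙ : Measure Θ)] fun ω => Real.log (1 + γ₁ ω * γ₂ ω / (γ₂ ω + C)) := by
    filter_upwards [haeΘ₁, haeΘ₂] with ω h1 h2
    have h3 : 0 ≤ γ₁ ω * γ₂ ω / (γ₂ ω + C) := by positivity
    exact Real.log_nonneg (by linarith)
  have hmeasF : Measurable (fun q : ℝ × ℝ =>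
      ENNReal.ofReal (Real.log (1 + q.1 * q.2 / (q.2 + C)))) := by
    apply ENNReal.measurable_ofReal.comp
    apply Real.measurable_log.comp
    exact measurable_const.add
      ((measurable_fst.mul measurable_snd).div (measurable_snd.add measurable_const))
  -- move to the joint law and then to the product measure
  have hstep0 : ∫ ω, Real.log (1 + γ₁ ω * γ₂ ω / (γ₂ ω + C))
      = (∫⁻ ω, ENNReal.ofReal (Real.log (1 + γ₁ ω * γ₂ ω / (γ₂ ω + C))) ∂ℙ).toReal := by
    rw [integral_eq_lintegral_of_nonneg_ae hnnΘ]
    exact (Real.measurable_log.comp (measurable_const.add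
      ((hγ₁m.mul hγ₂m).div (hγ₂m.add measurable_const)))).aestronglyMeasurable
  have hjoint : Measure.map (fun ω => (γ₁ ω, γ₂ ω)) ℙ
      = (Measure.map γ₁ ℙ).prod (Measure.map γ₂ ℙ) :=
    (ProbabilityTheory.indepFun_iff_map_prod_eq_prod_map_map
      hγ₁m.aemeasurable hγ₂m.aemeasurable).mp hindep
  have hstep1 : (∫⁻ ω, ENNReal.ofReal (Real.log (1 + γ₁ ω * γ₂ ω / (γ₂ ω + C))) ∂ℙ)
      = ∫⁻ x, (∫⁻ y,
          ENNReal.ofReal (Real.log (1 + y * x / (x + C))) ∂(Measure.map γ₁ ℙ))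
            ∂(Measure.map γ₂ ℙ) := by
    calc (∫⁻ ω, ENNReal.ofReal (Real.log (1 + γ₁ ω * γ₂ ω / (γ₂ ω + C))) ∂ℙ)
        = ∫⁻ q, ENNReal.ofReal (Real.log (1 + q.1 * q.2 / (q.2 + C)))
            ∂(Measure.map (fun ω => (γ₁ ω, γ₂ ω)) ℙ) :=
          (lintegral_map hmeasF (hγ₁m.prodMk hγ₂m)).symm
      _ = ∫⁻ q, ENNReal.ofReal (Real.log (1 + q.1 * q.2 / (q.2 + C)))
            ∂((Measure.map γ₁ ℙ).prod (Measure.map γ₂ ℙ)) := by rw [hjoint]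
      _ = ∫⁻ x, (∫⁻ y,
            ENNReal.ofReal (Real.log (1 + y * x / (x + C))) ∂(Measure.map γ₁ ℙ))
              ∂(Measure.map γ₂ ℙ) :=
          lintegral_prod_symm _ hmeasF.aemeasurable
  -- layer-cake for the inner integral
  have hinner : ∀ x : ℝ, 0 < x →
      (∫⁻ y, ENNReal.ofReal (Real.log (1 + y * x / (x + C))) ∂(Measure.map γ₁ ℙ))
        = ∫⁻ z in Set.Ioi (0:ℝ), ENNReal.ofReal ((1 + z)⁻¹)
            * ENNReal.ofReal (Real.exp (-lam * (z * (x + C) / x))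
              * ∑ n ∈ Finset.range m₁, lam ^ n * (z * (x + C) / x) ^ n / n.factorial) := by
    intro x hx
    have ha : 0 < x / (x + C) := by positivity
    have h1 : (fun y : ℝ => ENNReal.ofReal (Real.log (1 + y * x / (x + C))))
        = fun y => ENNReal.ofReal (Real.log (1 + (x / (x + C)) * y)) := by
      funext y; rw [show y * x / (x + C) = x / (x + C) * y by ring]
    rw [h1, aux_logint hμ₁0 ha
      (fun t => Real.exp (-lam * t) * ∑ n ∈ Finset.range m₁, lam ^ n * t ^ n / n.factorial)
      hSurv]
    refine setLIntegral_congr_fun measurableSet_Ioi (fun z hz => ?_)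
    rw [div_div_eq_mul_div]
  -- the kernel for the swapped double integral
  set W : ℝ × ℝ → ENNReal := fun q =>
    ENNReal.ofReal ((1 + q.2)⁻¹) * ENNReal.ofReal (Real.exp (-lam * (q.2 * (q.1 + C) / q.1))
      * ∑ n ∈ Finset.range m₁, lam ^ n * (q.2 * (q.1 + C) / q.1) ^ n / n.factorial) with hW
  have hWmeas : Measurable W := by
    have hT : Measurable (fun q : ℝ × ℝ => q.2 * (q.1 + C) / q.1) :=
      (measurable_snd.mul (measurable_fst.add measurable_const)).div measurable_fst
    rw [hW]
    refine Measurable.fun_mul ?_ ?_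
    · exact ENNReal.measurable_ofReal.comp ((measurable_const.add measurable_snd).inv)
    · refine ENNReal.measurable_ofReal.comp (Measurable.mul ?_ ?_)
      · exact Real.measurable_exp.comp (hT.const_mul (-lam))
      · exact Finset.measurable_sum _
          (fun n _ => ((hT.pow_const n).const_mul (lam ^ n)).div_const _)
  have hμ₂ae : ∀ᵐ x ∂(Measure.map γ₂ ℙ), 0 < x := by
    rw [ae_iff]
    have h : {x : ℝ | ¬ 0 < x} = Set.Iic 0 := by ext x; simp
    rw [h]; exact hμ₂0
  have hstep2 : (∫⁻ x, (∫⁻ y, ENNReal.ofReal (Real.log (1 + y * x / (x + C)))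
        ∂(Measure.map γ₁ ℙ)) ∂(Measure.map γ₂ ℙ))
      = ∫⁻ z in Set.Ioi (0:ℝ), (∫⁻ x, W (x, z) ∂(Measure.map γ₂ ℙ)) := by
    have h1 : (∫⁻ x, (∫⁻ y, ENNReal.ofReal (Real.log (1 + y * x / (x + C)))
          ∂(Measure.map γ₁ ℙ)) ∂(Measure.map γ₂ ℙ))
        = ∫⁻ x, (∫⁻ z in Set.Ioi (0:ℝ), W (x, z)) ∂(Measure.map γ₂ ℙ) :=
      lintegral_congr_ae (hμ₂ae.mono (fun x hx => hinner x hx))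
    rw [h1]
    exact lintegral_lintegral_swap (hWmeas.aemeasurable)
  -- inner x-integral notation
  set Aint : ℕ → ℝ → ENNReal := fun p z =>
    ∫⁻ x, ENNReal.ofReal (x ^ (-(p : ℝ)) * Real.exp (-(lam * C * z) / x) * f₂ x) with hAint
  have hψmeas : ∀ p : ℕ, Measurable (fun q : ℝ × ℝ =>
      ENNReal.ofReal (q.2 ^ (-(p : ℝ)) * Real.exp (-(lam * C * q.1) / q.2) * f₂ q.2)) := by
    intro p
    refine ENNReal.measurable_ofReal.comp (Measurable.mul (Measurable.mul ?_ ?_) ?_)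
    · fun_prop
    · fun_prop
    · exact hf₂meas.comp measurable_snd
  have hAmeas : ∀ p : ℕ, Measurable (Aint p) := fun p =>
    (hψmeas p).lintegral_prod_right'
  have hψxmeas : ∀ (p : ℕ) (z : ℝ), Measurable (fun x : ℝ =>
      ENNReal.ofReal (x ^ (-(p : ℝ)) * Real.exp (-(lam * C * z) / x) * f₂ x)) := by
    intro p z
    refine ENNReal.measurable_ofReal.comp (Measurable.mul (Measurable.mul ?_ ?_) ?_)
    · fun_prop
    · fun_prop
    · exact hf₂meas
  have hf₂measE : Measurable (fun x : ℝ => ENNReal.ofReal (f₂ x)) :=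
    ENNReal.measurable_ofReal.comp hf₂meas
  have hΦmeas : ∀ n : ℕ, Measurable (fun z : ℝ =>
      ENNReal.ofReal (z ^ n / (1 + z) * Real.exp (-lam * z))) := by
    intro n
    exact ENNReal.measurable_ofReal.comp (by fun_prop)
  have hstep3 : ∀ z : ℝ, 0 < z →
      (∫⁻ x, W (x, z) ∂(Measure.map γ₂ ℙ))
        = ∑ n ∈ Finset.range m₁, ∑ p ∈ Finset.range (n + 1),
            ENNReal.ofReal ((1 / (n.factorial : ℝ)) * (n.choose p : ℝ) * lam ^ n * C ^ p)
              * (ENNReal.ofReal (z ^ n / (1 + z) * Real.exp (-lam * z)) * Aint p z) := by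
    intro z hz
    have hWz : Measurable (fun x : ℝ => W (x, z)) :=
      hWmeas.comp (measurable_id.prodMk measurable_const)
    rw [hγ₂, lintegral_withDensity_eq_lintegral_mul volume
      hf₂measE (g := fun x => W (x, z)) hWz]
    have h1 : ∀ x : ℝ, ((fun x => ENNReal.ofReal (f₂ x)) * fun x => W (x, z)) x
        = ∑ n ∈ Finset.range m₁, ∑ p ∈ Finset.range (n + 1),
            ENNReal.ofReal ((1 / (n.factorial : ℝ)) * (n.choose p : ℝ) * lam ^ n * C ^ p)
              * ENNReal.ofReal (z ^ n / (1 + z) * Real.exp (-lam * z))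
              * ENNReal.ofReal (x ^ (-(p : ℝ)) * Real.exp (-(lam * C * z) / x) * f₂ x) :=
      fun x => aux_pointwise hlam hC hz f₂ hf₂nn hf₂0 x
    rw [lintegral_congr h1]
    rw [lintegral_finset_sum _ (fun n _ => Finset.measurable_sum _ (fun p _ =>
      (Measurable.const_mul (hψxmeas p z) _)))]
    refine Finset.sum_congr rfl (fun n _ => ?_)
    rw [lintegral_finset_sum _ (fun p _ => (Measurable.const_mul (hψxmeas p z) _))]
    refine Finset.sum_congr rfl (fun p _ => ?_)
    rw [lintegral_const_mul _ (hψxmeas p z), mul_assoc]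
  have hstep4 : (∫⁻ z in Set.Ioi (0:ℝ), (∫⁻ x, W (x, z) ∂(Measure.map γ₂ ℙ)))
      = ∑ n ∈ Finset.range m₁, ∑ p ∈ Finset.range (n + 1),
          ENNReal.ofReal ((1 / (n.factorial : ℝ)) * (n.choose p : ℝ) * lam ^ n * C ^ p)
            * ∫⁻ z in Set.Ioi (0:ℝ),
                ENNReal.ofReal (z ^ n / (1 + z) * Real.exp (-lam * z)) * Aint p z := by
    rw [setLIntegral_congr_fun measurableSet_Ioi (fun z hz => hstep3 z hz)]
    rw [lintegral_finset_sum _ (fun n _ => Finset.measurable_sum _ (fun p _ =>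
      Measurable.const_mul ((hΦmeas n).fun_mul (hAmeas p)) _))]
    refine Finset.sum_congr rfl (fun n _ => ?_)
    rw [lintegral_finset_sum _ (fun p _ =>
      Measurable.const_mul ((hΦmeas n).fun_mul (hAmeas p)) _)]
    refine Finset.sum_congr rfl (fun p _ => ?_)
    rw [lintegral_const_mul _ ((hΦmeas n).fun_mul (hAmeas p))]
  -- total mass of f₂ is 1
  have htot : (∫⁻ x, ENNReal.ofReal (f₂ x)) = 1 := by
    have h1 : Measure.map γ₂ ℙ Set.univ = 1 := measure_univ
    rw [hγ₂, withDensity_apply _ MeasurableSet.univ, Measure.restrict_univ] at h1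
    exact h1
  -- finiteness of the double lintegrals
  have hMfin : ∀ n p : ℕ, p ≤ n →
      (∫⁻ z in Set.Ioi (0:ℝ),
        ENNReal.ofReal (z ^ n / (1 + z) * Real.exp (-lam * z)) * Aint p z) < ⊤ := by
    intro n p hpn
    have hbA : ∀ z : ℝ, 0 < z →
        Aint p z ≤ ENNReal.ofReal ((p.factorial : ℝ) / (lam * C * z) ^ p) := by
      intro z hz
      have hc : 0 < lam * C * z := by positivity
      calc Aint p z
          ≤ ∫⁻ x, ENNReal.ofReal ((p.factorial : ℝ) / (lam * C * z) ^ p * f₂ x) := by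
            refine lintegral_mono (fun x => ENNReal.ofReal_le_ofReal ?_)
            rcases le_or_gt x 0 with hx | hx
            · rw [hf₂0 x hx, mul_zero, mul_zero]
            · exact mul_le_mul_of_nonneg_right (aux_rpow_exp_bound hc hx p) (hf₂nn x)
        _ = ENNReal.ofReal ((p.factorial : ℝ) / (lam * C * z) ^ p)
              * ∫⁻ x, ENNReal.ofReal (f₂ x) := by
            have hnn : (0:ℝ) ≤ (p.factorial : ℝ) / (lam * C * z) ^ p := by positivity
            simp_rw [ENNReal.ofReal_mul hnn]
            rw [lintegral_const_mul _ hf₂measE]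
        _ = ENNReal.ofReal ((p.factorial : ℝ) / (lam * C * z) ^ p) := by rw [htot, mul_one]
    have hb2 : (∫⁻ z in Set.Ioi (0:ℝ),
          ENNReal.ofReal (z ^ n / (1 + z) * Real.exp (-lam * z)) * Aint p z)
        ≤ ∫⁻ z in Set.Ioi (0:ℝ), ENNReal.ofReal
            ((p.factorial : ℝ) / (lam * C) ^ p * (z ^ (n - p) * Real.exp (-lam * z))) := by
      refine setLIntegral_mono_ae' measurableSet_Ioi (ae_of_all _ (fun z hz => ?_))
      have hz : (0:ℝ) < z := hz
      have h1z : (0:ℝ) < 1 + z := by linarith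
      have hφnn : 0 ≤ z ^ n / (1 + z) * Real.exp (-lam * z) := by positivity
      calc ENNReal.ofReal (z ^ n / (1 + z) * Real.exp (-lam * z)) * Aint p z
          ≤ ENNReal.ofReal (z ^ n / (1 + z) * Real.exp (-lam * z))
              * ENNReal.ofReal ((p.factorial : ℝ) / (lam * C * z) ^ p) :=
            mul_le_mul_right (hbA z hz) _
        _ = ENNReal.ofReal (z ^ n / (1 + z) * Real.exp (-lam * z)
              * ((p.factorial : ℝ) / (lam * C * z) ^ p)) := (ENNReal.ofReal_mul hφnn).symm
        _ ≤ ENNReal.ofReal ((p.factorial : ℝ) / (lam * C) ^ p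
              * (z ^ (n - p) * Real.exp (-lam * z))) := by
            refine ENNReal.ofReal_le_ofReal ?_
            have hzne : z ≠ 0 := ne_of_gt hz
            have hlC : (lam * C) ^ p ≠ 0 := by positivity
            have hzn : z ^ n = z ^ (n - p) * z ^ p := by
              rw [← pow_add, Nat.sub_add_cancel hpn]
            have heq : z ^ n / (1 + z) * Real.exp (-lam * z)
                  * ((p.factorial : ℝ) / (lam * C * z) ^ p)
                = (p.factorial : ℝ) / (lam * C) ^ p
                    * (z ^ (n - p) * Real.exp (-lam * z)) * (1 + z)⁻¹ := by
              rw [mul_pow, hzn]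
              field_simp
            rw [heq]
            have hinv : (1 + z)⁻¹ ≤ 1 := by
              rw [inv_le_one₀ h1z]; linarith
            have hKnn : (0:ℝ) ≤ (p.factorial : ℝ) / (lam * C) ^ p
                * (z ^ (n - p) * Real.exp (-lam * z)) := by positivity
            calc (p.factorial : ℝ) / (lam * C) ^ p * (z ^ (n - p) * Real.exp (-lam * z))
                  * (1 + z)⁻¹
                ≤ (p.factorial : ℝ) / (lam * C) ^ p * (z ^ (n - p) * Real.exp (-lam * z))
                  * 1 := mul_le_mul_of_nonneg_left hinv hKnn
              _ = _ := mul_one _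
    have hInt : Integrable (fun z : ℝ => (p.factorial : ℝ) / (lam * C) ^ p
        * (z ^ (n - p) * Real.exp (-lam * z))) (volume.restrict (Set.Ioi 0)) :=
      ((aux_integrableOn_pow_mul_exp (n - p) hlam).const_mul _)
    have hfin := (hasFiniteIntegral_iff_ofReal
      ((ae_restrict_iff' measurableSet_Ioi).mpr (ae_of_all _ (fun z hz => by
        have hz : (0:ℝ) < z := hz
        positivity)))).mp hInt.2
    exact lt_of_le_of_lt hb2 hfin
  -- the real inner integral equals the toReal of Aint
  have hAeq : ∀ (p : ℕ) (z : ℝ),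
      (∫ x in Set.Ioi (0:ℝ), x ^ (-(p : ℝ)) * Real.exp (-(lam * C * z) / x) * f₂ x)
        = (Aint p z).toReal := by
    intro p z
    have hsplit : Aint p z = ∫⁻ x in Set.Ioi (0:ℝ),
        ENNReal.ofReal (x ^ (-(p : ℝ)) * Real.exp (-(lam * C * z) / x) * f₂ x) := by
      have h0 : (∫⁻ x in (Set.Ioi (0:ℝ))ᶜ,
          ENNReal.ofReal (x ^ (-(p : ℝ)) * Real.exp (-(lam * C * z) / x) * f₂ x)) = 0 := by
        rw [Set.compl_Ioi]
        rw [setLIntegral_congr_fun measurableSet_Iic (fun x hx => by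
          rw [hf₂0 x (Set.mem_Iic.mp hx), mul_zero, ENNReal.ofReal_zero])]
        exact lintegral_zero
      simp only [hAint]
      rw [← lintegral_add_compl (μ := volume)
        (fun x => ENNReal.ofReal (x ^ (-(p : ℝ)) * Real.exp (-(lam * C * z) / x) * f₂ x))
        measurableSet_Ioi, h0, add_zero]
    rw [hsplit, integral_eq_lintegral_of_nonneg_ae]
    · refine (ae_restrict_iff' measurableSet_Ioi).mpr (ae_of_all _ (fun x hx => ?_))
      have hx : (0:ℝ) < x := hx
      exact mul_nonneg (mul_nonneg (Real.rpow_nonneg hx.le _) (Real.exp_pos _).le) (hf₂nn x)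
    · refine Measurable.aestronglyMeasurable ?_
      refine Measurable.mul (Measurable.mul ?_ ?_) hf₂meas
      · fun_prop
      · fun_prop
  -- the real outer integral equals the toReal of the double lintegral
  have hMreal : ∀ n p : ℕ, p ≤ n →
      (∫ z in Set.Ioi (0:ℝ), z ^ n / (1 + z) * Real.exp (-lam * z) *
          ∫ x in Set.Ioi (0:ℝ), x ^ (-(p : ℝ)) * Real.exp (-(lam * C * z) / x) * f₂ x)
        = (∫⁻ z in Set.Ioi (0:ℝ),
            ENNReal.ofReal (z ^ n / (1 + z) * Real.exp (-lam * z)) * Aint p z).toReal := by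
    intro n p hpn
    have h1 : (∫ z in Set.Ioi (0:ℝ), z ^ n / (1 + z) * Real.exp (-lam * z) *
          ∫ x in Set.Ioi (0:ℝ), x ^ (-(p : ℝ)) * Real.exp (-(lam * C * z) / x) * f₂ x)
        = ∫ z in Set.Ioi (0:ℝ),
            z ^ n / (1 + z) * Real.exp (-lam * z) * (Aint p z).toReal := by
      refine integral_congr_ae (ae_of_all _ (fun z => ?_))
      simp only [hAeq p z]
    rw [h1, integral_eq_lintegral_of_nonneg_ae]
    rotate_left
    · refine (ae_restrict_iff' measurableSet_Ioi).mpr (ae_of_all _ (fun z hz => ?_))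
      have hz : (0:ℝ) < z := hz
      have : (0:ℝ) ≤ z ^ n / (1 + z) * Real.exp (-lam * z) := by positivity
      exact mul_nonneg this ENNReal.toReal_nonneg
    · refine Measurable.aestronglyMeasurable ?_
      exact Measurable.mul (by fun_prop) (hAmeas p).ennreal_toReal
    congr 1
    have haefin : ∀ᵐ z ∂(volume.restrict (Set.Ioi (0:ℝ))),
        ENNReal.ofReal (z ^ n / (1 + z) * Real.exp (-lam * z)) * Aint p z < ⊤ :=
      ae_lt_top ((hΦmeas n).mul (hAmeas p)) (hMfin n p hpn).ne
    refine lintegral_congr_ae ?_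
    filter_upwards [haefin, self_mem_ae_restrict measurableSet_Ioi] with z hz1 hz2
    have hz : (0:ℝ) < z := hz2
    have hφpos : (0:ℝ) < z ^ n / (1 + z) * Real.exp (-lam * z) := by positivity
    have hφne : ENNReal.ofReal (z ^ n / (1 + z) * Real.exp (-lam * z)) ≠ 0 := by
      rw [ne_eq, ENNReal.ofReal_eq_zero]
      exact not_le.mpr hφpos
    have hA : Aint p z ≠ ⊤ := by
      rcases eq_or_ne (Aint p z) ⊤ with h | h
      · rw [h, ENNReal.mul_top hφne] at hz1
        exact absurd hz1 (lt_irrefl _)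
      · exact h
    rw [ENNReal.ofReal_mul hφpos.le, ENNReal.ofReal_toReal hA]
  -- final assembly
  rw [hstep0, hstep1, hstep2, hstep4]
  have hKMne : ∀ n p : ℕ, p ≤ n →
      (ENNReal.ofReal ((1 / (n.factorial : ℝ)) * (n.choose p : ℝ) * lam ^ n * C ^ p)
        * ∫⁻ z in Set.Ioi (0:ℝ),
            ENNReal.ofReal (z ^ n / (1 + z) * Real.exp (-lam * z)) * Aint p z) ≠ ⊤ :=
    fun n p hpn => ENNReal.mul_ne_top ENNReal.ofReal_ne_top (hMfin n p hpn).ne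
  rw [ENNReal.toReal_sum (fun n _ => (ENNReal.sum_lt_top.mpr (fun p hp =>
    lt_top_iff_ne_top.mpr (hKMne n p (Finset.mem_range_succ_iff.mp hp)))).ne)]
  refine Finset.sum_congr rfl (fun n _ => ?_)
  rw [ENNReal.toReal_sum (fun p hp => hKMne n p (Finset.mem_range_succ_iff.mp hp))]
  rw [Finset.mul_sum]
  refine Finset.sum_congr rfl (fun p hp => ?_)
  have hpn := Finset.mem_range_succ_iff.mp hp
  have hcnn : (0:ℝ) ≤ (1 / (n.factorial : ℝ)) * (n.choose p : ℝ) * lam ^ n * C ^ p := by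
    positivity
  rw [ENNReal.toReal_mul, ENNReal.toReal_ofReal hcnn, ← hMreal n p hpn]
  ring
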